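/- Let m ≥ 1 and let α be a norm on the real vector space of all linear maps ℝ^m → ℝ^m. Suppose J̃ maximizes the determinant subject to α(J) = 1, i.e., α(J̃) = 1 and det(J̃) ≥ det(J) for every linear map J : ℝ^m → ℝ^m with α(J) = 1 (such a maximizer exists and satisfies det(J̃) > 0, so J̃ is invertible). Then for every linear map T : ℝ^m → ℝ^m one has trace(J̃⁻¹ ∘ T) ≤ m · α(T). -/

import Mathlib

open Polynomial Filter Topology

theorem stmt1 (m : ℕ) (hm : 1 ≤ m)
    (α : Matrix (Fin m) (Fin m) ℝ → ℝ)
    (hα0 : ∀ A, α A = 0 ↔ A = 0)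
    (hαs : ∀ (c : ℝ) (A), α (c • A) = |c| * α A)
    (hαadd : ∀ A B, α (A + B) ≤ α A + α B)
    (J : Matrix (Fin m) (Fin m) ℝ)
    (hJ1 : α J = 1)
    (hJmax : ∀ A : Matrix (Fin m) (Fin m) ℝ, α A = 1 → A.det ≤ J.det)
    (hJdet : 0 < J.det)
    (T : Matrix (Fin m) (Fin m) ℝ) :
    Matrix.trace (J⁻¹ * T) ≤ (m : ℝ) * α T := by
  have hne : Nonempty (Fin m) := ⟨⟨0, hm⟩⟩
  have hcard : Fintype.card (Fin m) = m := Fintype.card_fin m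
  -- nonnegativity of α
  have αnn : ∀ A, 0 ≤ α A := by
    intro A
    have h1 : α ((-1 : ℝ) • A) = α A := by rw [hαs]; simp
    have h2 : α (A + (-1 : ℝ) • A) ≤ α A + α ((-1 : ℝ) • A) := hαadd _ _
    have h3 : A + (-1 : ℝ) • A = 0 := by simp
    rw [h3, (hα0 0).mpr rfl, h1] at h2
    linarith
  -- key inequality: det A ≤ α A ^ m * det J
  have key : ∀ A : Matrix (Fin m) (Fin m) ℝ, A.det ≤ α A ^ m * J.det := by
    intro A
    rcases (αnn A).eq_or_lt with h | h
    · have hA0 : A = 0 := (hα0 A).mp h.symm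
      rw [hA0, (hα0 0).mpr rfl]
      simp [Matrix.det_zero, zero_pow (by omega : m ≠ 0)]
    · set c := α A with hc
      have hB : α (c⁻¹ • A) = 1 := by
        rw [hαs, abs_of_pos (inv_pos.mpr h)]
        field_simp
        exact hc.symm
      have hdet : (c⁻¹ • A).det ≤ J.det := hJmax _ hB
      have : A.det = c ^ m * (c⁻¹ • A).det := by
        rw [Matrix.det_smul, hcard, ← mul_assoc, ← mul_pow,
          mul_inv_cancel₀ h.ne', one_pow, one_mul]
      rw [this]
      exact mul_le_mul_of_nonneg_left hdet (pow_nonneg h.le _)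
  set M := J⁻¹ * T with hM
  set c := α T with hc
  have hcn : 0 ≤ c := αnn T
  have hJu : IsUnit J.det := isUnit_iff_ne_zero.mpr hJdet.ne'
  -- factorization
  have hfac : ∀ t : ℝ, (J + t • T).det = J.det * (1 + t • M).det := by
    intro t
    rw [← Matrix.det_mul]
    congr 1
    rw [mul_add, mul_one, Matrix.mul_smul, hM, ← Matrix.mul_assoc,
      Matrix.mul_nonsing_inv J hJu, Matrix.one_mul]
  set P := (Matrix.det (1 + (X : ℝ[X]) • M.map C)).divX.divX with hP
  have hexp : ∀ t : ℝ, (1 + t • M).det = 1 + M.trace * t + P.eval t * t ^ 2 :=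
    fun t => Matrix.det_one_add_smul t M
  -- eventual inequality on (0, ∞)
  have hev : ∀ᶠ t in 𝓝[>] (0 : ℝ),
      Matrix.trace M ≤ ((1 + c * t) ^ m - 1) / t - P.eval t * t := by
    filter_upwards [self_mem_nhdsWithin] with t (ht : 0 < t)
    have hα1 : α (J + t • T) ≤ 1 + c * t := by
      calc α (J + t • T) ≤ α J + α (t • T) := hαadd _ _
        _ = 1 + c * t := by rw [hJ1, hαs, abs_of_pos ht, hc]; ring
    have h1 : (J + t • T).det ≤ (1 + c * t) ^ m * J.det := by
      calc (J + t • T).det ≤ α (J + t • T) ^ m * J.det := key _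
        _ ≤ (1 + c * t) ^ m * J.det :=
          mul_le_mul_of_nonneg_right (pow_le_pow_left₀ (αnn _) hα1 m) hJdet.le
    rw [hfac, hexp] at h1
    have h2 : 1 + M.trace * t + P.eval t * t ^ 2 ≤ (1 + c * t) ^ m := by
      have := (mul_le_mul_iff_right₀ hJdet).mp (by linarith [h1] : J.det * (1 + M.trace * t + P.eval t * t ^ 2) ≤ J.det * (1 + c * t) ^ m)
      linarith
    rw [le_sub_iff_add_le, le_div_iff₀ ht]
    nlinarith [h2]
  -- limits
  have hd : HasDerivAt (fun t : ℝ => (1 + c * t) ^ m) (m * c) 0 := by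
    have h0 : HasDerivAt (fun t : ℝ => 1 + c * t) c 0 := by
      simpa using ((hasDerivAt_id (0:ℝ)).const_mul c).const_add 1
    simpa using h0.fun_pow m
  have h1 : Tendsto (fun t : ℝ => ((1 + c * t) ^ m - 1) / t) (𝓝[>] 0) (𝓝 (m * c)) := by
    have := hasDerivAt_iff_tendsto_slope.mp hd
    have h2 := this.mono_left (nhdsWithin_mono 0 (fun x hx => ne_of_gt hx))
    refine h2.congr (fun t => ?_)
    simp [slope_def_field, div_eq_inv_mul]
  have h2 : Tendsto (fun t : ℝ => P.eval t * t) (𝓝[>] 0) (𝓝 0) := by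
    have : ContinuousAt (fun t : ℝ => P.eval t * t) 0 :=
      (P.continuousAt.mul continuousAt_id)
    have := this.continuousWithinAt (s := Set.Ioi 0)
    simpa using this.tendsto
  have hlim : Tendsto (fun t : ℝ => ((1 + c * t) ^ m - 1) / t - P.eval t * t)
      (𝓝[>] 0) (𝓝 (m * c)) := by simpa using h1.sub h2
  exact ge_of_tendsto hlim hev
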